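/- Let F_∞ = 8/3 and for t ≥ 0 and x ∈ (−1 + t − t²/3, 1 + t + t²/3) with x ≠ −(t/3)³ define u(t,x) = (x + (t/3)³)^{2/3} − t²/9 and F(t,x) = (4/3)(x + (t/3)³)^{1/3} + (4/3)(1 − t/3), where r^{1/3} denotes the real cube root and r^{2/3} its square. Then at every such point (t,x) the partial derivatives u_t, u_x, F_t, F_x exist and satisfy u_t + u·u_x = F/2 − F_∞/4 and F_t + u·F_x = 0. -/

import Mathlib

/-- The real cube root: `cbrt r = sign r * |r|^(1/3)`. -/
noncomputable def cbrt (r : ℝ) : ℝ := Real.sign r * |r| ^ ((1 : ℝ)/3)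

lemma cbrt_neg (r : ℝ) : cbrt (-r) = - cbrt r := by
  simp [cbrt, Real.sign_neg]

lemma cbrt_of_pos {r : ℝ} (hr : 0 < r) : cbrt r = r ^ ((1:ℝ)/3) := by
  simp [cbrt, Real.sign_of_pos hr, abs_of_pos hr]

lemma cbrt_ne_zero {r : ℝ} (hr : r ≠ 0) : cbrt r ≠ 0 := by
  rcases lt_or_gt_of_ne hr with h | h
  · rw [show r = -(-r) by ring, cbrt_neg, cbrt_of_pos (by linarith)]
    have := Real.rpow_pos_of_pos (show (0:ℝ) < -r by linarith) ((1:ℝ)/3)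
    intro hc; rw [neg_eq_zero] at hc; exact this.ne' hc
  · rw [cbrt_of_pos h]
    exact (Real.rpow_pos_of_pos h _).ne'

lemma cbrt_sq_of_pos {r : ℝ} (hr : 0 < r) : (cbrt r)^2 = r ^ ((2:ℝ)/3) := by
  rw [cbrt_of_pos hr, ← Real.rpow_natCast (r ^ ((1:ℝ)/3)) 2, ← Real.rpow_mul hr.le]
  norm_num

lemma hasDerivAt_cbrt_pos {w : ℝ} (hw : 0 < w) :
    HasDerivAt cbrt (1/(3 * (cbrt w)^2)) w := by
  have h1 : HasDerivAt (fun r : ℝ => r ^ ((1:ℝ)/3))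
      (((1:ℝ)/3) * w ^ ((1:ℝ)/3 - 1)) w :=
    Real.hasDerivAt_rpow_const (Or.inl hw.ne')
  have heq : (fun r : ℝ => r ^ ((1:ℝ)/3)) =ᶠ[nhds w] cbrt := by
    filter_upwards [eventually_gt_nhds hw] with r hr
    rw [cbrt_of_pos hr]
  have h2 := h1.congr_of_eventuallyEq heq.symm
  suffices hs : 1/(3 * (cbrt w)^2) = ((1:ℝ)/3) * w ^ ((1:ℝ)/3 - 1) by rw [hs]; exact h2
  rw [cbrt_sq_of_pos hw, show (1:ℝ)/3 - 1 = -(2/3) by norm_num,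
    Real.rpow_neg hw.le]
  field_simp

lemma hasDerivAt_cbrt {w : ℝ} (hw : w ≠ 0) :
    HasDerivAt cbrt (1/(3 * (cbrt w)^2)) w := by
  rcases lt_or_gt_of_ne hw with h | h
  · have hpos := hasDerivAt_cbrt_pos (show 0 < -w by linarith)
    have h3 : HasDerivAt (fun r : ℝ => -(cbrt (-r)))
        (-((1/(3 * (cbrt (-w))^2)) * (-1))) w :=
      (hpos.comp w (hasDerivAt_neg w)).neg
    have heq : (fun r : ℝ => -(cbrt (-r))) = cbrt := by
      funext r; rw [cbrt_neg, neg_neg]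
    rw [heq] at h3
    have hval : -((1/(3 * (cbrt (-w))^2)) * (-1)) = 1/(3 * (cbrt w)^2) := by
      rw [cbrt_neg]; ring
    exact hval ▸ h3
  · exact hasDerivAt_cbrt_pos h

/-- The cusp solution `u(t,x) = (x + (t/3)³)^{2/3} - t²/9`. -/
noncomputable def cuspU (t x : ℝ) : ℝ := (cbrt (x + (t/3)^3)) ^ 2 - t^2/9

/-- The cumulative energy `F(t,x) = (4/3)(x + (t/3)³)^{1/3} + (4/3)(1 - t/3)`. -/
noncomputable def cuspF (t x : ℝ) : ℝ :=
  (4/3) * cbrt (x + (t/3)^3) + (4/3) * (1 - t/3)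

/-- Away from the moving cusp point `x = -(t/3)³`, the cusp solution solves the
Hunter–Saxton system `u_t + u u_x = F/2 - F_∞/4`, `F_t + u F_x = 0` classically
(here `F_∞ = 8/3`). -/
theorem cusp_solves_HS_classically
    (t x : ℝ) (ht : 0 ≤ t)
    (hx1 : -1 + t - t^2/3 < x) (hx2 : x < 1 + t + t^2/3)
    (hx3 : x ≠ -(t/3)^3) :
    ∃ ut ux Ft Fx : ℝ,
      HasDerivAt (fun s => cuspU s x) ut t ∧
      HasDerivAt (fun y => cuspU t y) ux x ∧
      HasDerivAt (fun s => cuspF s x) Ft t ∧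
      HasDerivAt (fun y => cuspF t y) Fx x ∧
      ut + cuspU t x * ux = cuspF t x / 2 - (8/3) / 4 ∧
      Ft + cuspU t x * Fx = 0 := by
  have hw : x + (t/3)^3 ≠ 0 := by
    intro h; apply hx3; linarith
  set c : ℝ := cbrt (x + (t/3)^3) with hc
  have hcne : c ≠ 0 := cbrt_ne_zero hw
  have hcb := hasDerivAt_cbrt hw
  -- inner derivative in x
  have hinx : HasDerivAt (fun y : ℝ => y + (t/3)^3) 1 x :=
    (hasDerivAt_id x).add_const _
  have hcx : HasDerivAt (fun y : ℝ => cbrt (y + (t/3)^3))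
      ((1/(3 * c^2)) * 1) x := by have := hcb.comp x hinx; exact this
  -- inner derivative in t
  have hint : HasDerivAt (fun s : ℝ => x + (s/3)^3)
      (↑(3:ℕ) * (t/3)^(3-1) * (1/3)) t :=
    (((hasDerivAt_id t).div_const 3).pow 3).const_add x
  have hct : HasDerivAt (fun s : ℝ => cbrt (x + (s/3)^3))
      ((1/(3 * c^2)) * (↑(3:ℕ) * (t/3)^(3-1) * (1/3))) t := by have := hcb.comp t hint; exact this
  -- u derivatives
  have hux : HasDerivAt (fun y => cuspU t y)
      (↑(2:ℕ) * c^(2-1) * ((1/(3 * c^2)) * 1)) x := by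
    unfold cuspU
    exact (hcx.pow 2).sub_const _
  have hut : HasDerivAt (fun s => cuspU s x)
      (↑(2:ℕ) * c^(2-1) * ((1/(3 * c^2)) * (↑(3:ℕ) * (t/3)^(3-1) * (1/3)))
        - (↑(2:ℕ) * t^(2-1) * 1)/9) t := by
    unfold cuspU
    exact (hct.pow 2).sub (((hasDerivAt_id t).pow 2).div_const 9)
  -- F derivatives
  have hFx : HasDerivAt (fun y => cuspF t y)
      ((4/3) * ((1/(3 * c^2)) * 1)) x := by
    unfold cuspF
    exact (hcx.const_mul (4/3)).add_const _
  have hFt : HasDerivAt (fun s => cuspF s x)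
      ((4/3) * ((1/(3 * c^2)) * (↑(3:ℕ) * (t/3)^(3-1) * (1/3)))
        + (4/3) * -(1/3)) t := by
    unfold cuspF
    exact (hct.const_mul (4/3)).add
      ((((hasDerivAt_id t).div_const 3).const_sub 1).const_mul (4/3))
  refine ⟨_, _, _, _, hut, hux, hFt, hFx, ?_, ?_⟩ <;>
  · show _ = _
    simp only [cuspU, cuspF, ← hc]
    field_simp
    ring
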